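/- arXiv:0911.1682 — 3 statements merged into one kernel-verified Lean document; each statement's English description precedes it below -/
import Mathlib

section
/- Suppose that for every 1 ≤ r ≤ k − 1 and every g ∈ 𝓕, ‖𝔼(g(X_{r+1}) | 𝓜_1) − 𝔼 g(X_{r+1})‖_∞ ≤ δ_r (essential supremum norm). Then for f ∈ 𝓕 with 𝔼 f(X_1) = 0 and all 1 ≤ k ≤ n, σ_k²(f) ≤ σ_1²(f) + 2 𝔼|f(X_1)| Σ_{r=1}^{k−1} δ_r. -/
open MeasureTheory ProbabilityTheory Real
open scoped ENNReal

/-- **Proposition 3.2 (estimate of the variance terms).**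
If `‖𝔼(g(X_{r+1}) | 𝓜_1) − 𝔼 g(X_{r+1})‖_∞ ≤ δ_r` for all `1 ≤ r ≤ k − 1` and all `g ∈ 𝓕`,
then `σ_k²(f) ≤ σ_1²(f) + 2 𝔼|f(X_1)| Σ_{r=1}^{k−1} δ_r`. -/
theorem variance_term_estimate
    {Ω : Type*} [MeasurableSpace Ω] (P : Measure Ω) [IsProbabilityMeasure P]
    {𝒳 : Type*} [MetricSpace 𝒳] [MeasurableSpace 𝒳] [BorelSpace 𝒳]
    (X : ℕ → Ω → 𝒳) (hXmeas : ∀ t, Measurable (X t))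
    -- strict stationarity: the law of (X_{1+k},…,X_{m+k}) equals the law of (X_1,…,X_m)
    (hstat : ∀ m k : ℕ,
      Measure.map (fun ω => fun i : Fin m => X (1 + k + i) ω) P
        = Measure.map (fun ω => fun i : Fin m => X (1 + i) ω) P)
    (n : ℕ) (hn : 1 ≤ n)
    -- (δ_r) nonincreasing, nonnegative
    (δ : ℕ → ℝ) (hδ_nonneg : ∀ r, 0 ≤ δ r) (hδ_mono : ∀ r s : ℕ, 1 ≤ r → r ≤ s → δ s ≤ δ r)
    (k : ℕ) (hk1 : 1 ≤ k) (hkn : k ≤ n)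
    -- the dependence assumption: for all 1 ≤ r ≤ k−1 and all g ∈ 𝓕
    (hdep : ∀ r : ℕ, 1 ≤ r → r ≤ k - 1 →
      ∀ g : 𝒳 → ℝ, LipschitzWith 1 g → (∀ y, |g y| ≤ 1 / 2) →
        ∀ᵐ ω ∂P,
          |(P[(fun ω' => g (X (r + 1) ω')) | MeasurableSpace.comap (X 1) inferInstance]) ω
            - ∫ ω', g (X (r + 1) ω') ∂P| ≤ δ r)
    -- f ∈ 𝓕
    (f : 𝒳 → ℝ) (hf_lip : LipschitzWith 1 f) (hf_bdd : ∀ y, |f y| ≤ 1 / 2)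
    (hf_mean : ∫ ω, f (X 1 ω) ∂P = 0) :
    (k : ℝ)⁻¹ * variance (fun ω => ∑ i ∈ Finset.Icc 1 k, f (X i ω)) P
      ≤ variance (fun ω => f (X 1 ω)) P
        + 2 * (∫ ω, |f (X 1 ω)| ∂P) * ∑ r ∈ Finset.Icc 1 (k - 1), δ r := by
  have hfc : Continuous f := hf_lip.continuous
  have hfm : ∀ i, Measurable (fun ω => f (X i ω)) := fun i => hfc.measurable.comp (hXmeas i)
  have hnorm : ∀ i ω, ‖f (X i ω)‖ ≤ 1 / 2 := fun i ω => by
    simpa [Real.norm_eq_abs] using hf_bdd (X i ω)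
  have hint : ∀ i, Integrable (fun ω => f (X i ω)) P := fun i =>
    ⟨(hfm i).aestronglyMeasurable,
      HasFiniteIntegral.of_bounded (C := 1 / 2) (Filter.Eventually.of_forall (hnorm i))⟩
  have hintmul : ∀ i j, Integrable (fun ω => f (X i ω) * f (X j ω)) P := fun i j =>
    (hint j).bdd_mul (hfm i).aestronglyMeasurable (Filter.Eventually.of_forall (hnorm i))
  -- stationarity in integral form
  have key : ∀ (M : ℕ) (g : (Fin M → 𝒳) → ℝ), Measurable g → ∀ s : ℕ,
      ∫ ω, g (fun i => X (1 + s + i) ω) ∂P = ∫ ω, g (fun i => X (1 + i) ω) ∂P := by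
    intro M g hg s
    have h1 : Measurable (fun ω => fun i : Fin M => X (1 + s + i) ω) :=
      measurable_pi_lambda _ fun i => hXmeas _
    have h2 : Measurable (fun ω => fun i : Fin M => X (1 + i) ω) :=
      measurable_pi_lambda _ fun i => hXmeas _
    rw [← integral_map h1.aemeasurable hg.aestronglyMeasurable, hstat M s,
      integral_map h2.aemeasurable hg.aestronglyMeasurable]
  -- all X i with i ≥ 1 have f-mean zero
  have hmean : ∀ i : ℕ, 1 ≤ i → ∫ ω, f (X i ω) ∂P = 0 := by
    intro i hi
    have hg : Measurable (fun v : Fin 1 → 𝒳 => f (v 0)) :=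
      hfc.measurable.comp (measurable_pi_apply 0)
    have h := key 1 _ hg (i - 1)
    have e0 : (1 : ℕ) + (i - 1) + ((0 : Fin 1) : ℕ) = i := by
      simp only [Fin.val_zero]; omega
    have e1 : (1 : ℕ) + ((0 : Fin 1) : ℕ) = 1 := by simp
    rw [show (fun ω => f (X i ω)) = fun ω =>
        (fun v : Fin 1 → 𝒳 => f (v 0)) (fun j : Fin 1 => X (1 + (i - 1) + j) ω) by
      funext ω; simp only; rw [e0]]
    rw [h]
    simp only [e1]
    exact hf_mean
  set c : ℕ → ℝ := fun r => ∫ ω, f (X 1 ω) * f (X (r + 1) ω) ∂P with hc_def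
  set D : ℝ := ∫ ω, |f (X 1 ω)| ∂P with hD_def
  set V1 : ℝ := ∫ ω, (f (X 1 ω)) ^ 2 ∂P with hV1_def
  set Sδ : ℝ := ∑ r ∈ Finset.Icc 1 (k - 1), δ r with hSδ_def
  have hD_nonneg : 0 ≤ D := integral_nonneg fun ω => abs_nonneg _
  have hc0 : c 0 = V1 := by
    simp only [hc_def, hV1_def, zero_add, sq]
  -- covariance stationarity
  have hcov : ∀ i j : ℕ, 1 ≤ i → i ≤ j →
      ∫ ω, f (X i ω) * f (X j ω) ∂P = c (j - i) := by
    intro i j hi hij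
    set r := j - i with hr
    have hg : Measurable (fun v : Fin (r + 1) → 𝒳 => f (v 0) * f (v (Fin.last r))) :=
      (hfc.measurable.comp (measurable_pi_apply 0)).mul
        (hfc.measurable.comp (measurable_pi_apply (Fin.last r)))
    have h := key (r + 1) _ hg (i - 1)
    have e0 : (1 : ℕ) + (i - 1) + ((0 : Fin (r + 1)) : ℕ) = i := by
      simp only [Fin.val_zero]; omega
    have e1 : (1 : ℕ) + (i - 1) + ((Fin.last r : Fin (r + 1)) : ℕ) = j := by
      simp only [Fin.val_last]; omega
    have e2 : (1 : ℕ) + ((0 : Fin (r + 1)) : ℕ) = 1 := by simp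
    have e3 : (1 : ℕ) + ((Fin.last r : Fin (r + 1)) : ℕ) = r + 1 := by
      simp only [Fin.val_last]; omega
    rw [show (fun ω => f (X i ω) * f (X j ω)) = fun ω =>
        (fun v : Fin (r + 1) → 𝒳 => f (v 0) * f (v (Fin.last r)))
          (fun a : Fin (r + 1) => X (1 + (i - 1) + a) ω) by
      funext ω; simp only; rw [e0, e1]]
    rw [h]
    simp only [e2, e3]
    rfl
  -- the covariance bound via the dependence condition
  have hcbound : ∀ r : ℕ, 1 ≤ r → r ≤ k - 1 → |c r| ≤ D * δ r := by
    intro r hr1 hrk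
    have hm : MeasurableSpace.comap (X 1) inferInstance ≤ ‹MeasurableSpace Ω› :=
      (hXmeas 1).comap_le
    set G : Ω → ℝ :=
      P[(fun ω' => f (X (r + 1) ω')) | MeasurableSpace.comap (X 1) inferInstance] with hG_def
    have hGdep := hdep r hr1 hrk f hf_lip hf_bdd
    have hmr : ∫ ω', f (X (r + 1) ω') ∂P = 0 := hmean (r + 1) (by omega)
    rw [hmr] at hGdep
    simp only [sub_zero] at hGdep
    have hsm : StronglyMeasurable[MeasurableSpace.comap (X 1) inferInstance]
        (fun ω => f (X 1 ω)) :=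
      (hfc.measurable.comp (measurable_iff_comap_le.mpr le_rfl)).stronglyMeasurable
    have hpull :
        P[(fun ω => f (X 1 ω)) * (fun ω => f (X (r + 1) ω)) | MeasurableSpace.comap (X 1) inferInstance]
          =ᵐ[P] (fun ω => f (X 1 ω)) * G :=
      condExp_stronglyMeasurable_mul_of_bound hm hsm (hint (r + 1)) (1 / 2)
        (Filter.Eventually.of_forall (hnorm 1))
    have hGint : Integrable G P := integrable_condExp
    have hprodint : Integrable (fun ω => f (X 1 ω) * G ω) P :=
      hGint.bdd_mul (hfm 1).aestronglyMeasurable (Filter.Eventually.of_forall (hnorm 1))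
    have hInt : c r = ∫ ω, f (X 1 ω) * G ω ∂P := by
      rw [hc_def]
      calc ∫ ω, f (X 1 ω) * f (X (r + 1) ω) ∂P
          = ∫ ω, ((fun ω => f (X 1 ω)) * (fun ω => f (X (r + 1) ω))) ω ∂P := rfl
        _ = ∫ ω, (P[(fun ω => f (X 1 ω)) * (fun ω => f (X (r + 1) ω)) | MeasurableSpace.comap (X 1) inferInstance]) ω ∂P :=
            (integral_condExp hm).symm
        _ = ∫ ω, f (X 1 ω) * G ω ∂P := integral_congr_ae hpull
    rw [hInt]
    have habsint : Integrable (fun ω => |f (X 1 ω)| * |G ω|) P := by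
      simpa [abs_mul] using hprodint.abs
    calc |∫ ω, f (X 1 ω) * G ω ∂P| ≤ ∫ ω, |f (X 1 ω)| * |G ω| ∂P := by
          simpa [Real.norm_eq_abs, abs_mul] using
            norm_integral_le_integral_norm (μ := P) (fun ω => f (X 1 ω) * G ω)
      _ ≤ ∫ ω, |f (X 1 ω)| * δ r ∂P := by
          refine integral_mono_ae habsint ((hint 1).abs.mul_const _) ?_
          filter_upwards [hGdep] with ω hω
          exact mul_le_mul_of_nonneg_left hω (abs_nonneg _)
      _ = D * δ r := by rw [integral_mul_const]
  -- notation for the partial sum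
  set S : Ω → ℝ := fun ω => ∑ i ∈ Finset.Icc 1 k, f (X i ω) with hS_def
  have hS_meas : Measurable S := Finset.measurable_sum _ fun i _ => hfm i
  have hS_bound : ∀ ω, ‖S ω‖ ≤ (k : ℝ) * (1 / 2) := by
    intro ω
    calc ‖S ω‖ ≤ ∑ i ∈ Finset.Icc 1 k, ‖f (X i ω)‖ := norm_sum_le _ _
      _ ≤ ∑ i ∈ Finset.Icc 1 k, (1 / 2 : ℝ) := Finset.sum_le_sum fun i _ => hnorm i ω
      _ = (k : ℝ) * (1 / 2) := by
          rw [Finset.sum_const, Nat.card_Icc]; simp [nsmul_eq_mul]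
  have hS_mem : MemLp S 2 P :=
    MemLp.of_bound hS_meas.aestronglyMeasurable _ (Filter.Eventually.of_forall hS_bound)
  have h1_mem : MemLp (fun ω => f (X 1 ω)) 2 P :=
    MemLp.of_bound (hfm 1).aestronglyMeasurable (1 / 2) (Filter.Eventually.of_forall (hnorm 1))
  have hS_mean : ∫ ω, S ω ∂P = 0 := by
    rw [hS_def]
    rw [integral_finset_sum _ fun i _ => hint i]
    exact Finset.sum_eq_zero fun i hi => hmean i (Finset.mem_Icc.mp hi).1
  have hVarS : variance S P = ∫ ω, (S ω) ^ 2 ∂P := by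
    rw [variance_eq_sub hS_mem]
    simp only [Pi.pow_apply]
    rw [show ∫ ω, S ω ∂P = 0 from hS_mean]
    ring
  have hVar1 : variance (fun ω => f (X 1 ω)) P = V1 := by
    rw [variance_eq_sub h1_mem]
    simp only [Pi.pow_apply]
    rw [hf_mean, hV1_def]
    ring
  -- expand the square of the sum
  have hexp : ∫ ω, (S ω) ^ 2 ∂P
      = ∑ i ∈ Finset.Icc 1 k, ∑ j ∈ Finset.Icc 1 k, ∫ ω, f (X i ω) * f (X j ω) ∂P := by
    have hsq : ∀ ω, (S ω) ^ 2
        = ∑ i ∈ Finset.Icc 1 k, ∑ j ∈ Finset.Icc 1 k, f (X i ω) * f (X j ω) := by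
      intro ω; rw [sq, hS_def, Finset.sum_mul_sum]
    simp_rw [hsq]
    rw [integral_finset_sum _ fun i _ => integrable_finset_sum _ fun j _ => hintmul i j]
    exact Finset.sum_congr rfl fun i _ => integral_finset_sum _ fun j _ => hintmul i j
  -- per-row bound
  have per : ∀ i ∈ Finset.Icc 1 k,
      ∑ j ∈ Finset.Icc 1 k, ∫ ω, f (X i ω) * f (X j ω) ∂P ≤ V1 + 2 * D * Sδ := by
    intro i hi
    obtain ⟨hi1, hik⟩ := Finset.mem_Icc.mp hi
    have hii : ∫ ω, f (X i ω) * f (X i ω) ∂P = V1 := by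
      rw [hcov i i hi1 le_rfl, Nat.sub_self, hc0]
    rw [← Finset.add_sum_erase _ _ hi, hii]
    have hterm : ∀ j ∈ (Finset.Icc 1 k).erase i,
        ∫ ω, f (X i ω) * f (X j ω) ∂P ≤ D * (if i ≤ j then δ (j - i) else δ (i - j)) := by
      intro j hj
      obtain ⟨hji, hjIcc⟩ := Finset.mem_erase.mp hj
      obtain ⟨hj1, hjk⟩ := Finset.mem_Icc.mp hjIcc
      by_cases hij : i ≤ j
      · rw [if_pos hij, hcov i j hi1 hij]
        exact (le_abs_self _).trans (hcbound (j - i) (by omega) (by omega))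
      · rw [if_neg hij]
        push_neg at hij
        have : ∫ ω, f (X i ω) * f (X j ω) ∂P = c (i - j) := by
          rw [← hcov j i hj1 hij.le]
          simp_rw [mul_comm]
        rw [this]
        exact (le_abs_self _).trans (hcbound (i - j) (by omega) (by omega))
    have hsplit : (Finset.Icc 1 k).erase i = Finset.Icc 1 (i - 1) ∪ Finset.Icc (i + 1) k := by
      ext j
      simp only [Finset.mem_erase, Finset.mem_Icc, Finset.mem_union]
      omega
    have hdisj : Disjoint (Finset.Icc 1 (i - 1)) (Finset.Icc (i + 1) k) := by
      rw [Finset.disjoint_left]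
      intro j hj hj'
      simp only [Finset.mem_Icc] at hj hj'
      omega
    have hδsum : ∑ j ∈ (Finset.Icc 1 k).erase i,
        (if i ≤ j then δ (j - i) else δ (i - j)) ≤ 2 * Sδ := by
      rw [hsplit, Finset.sum_union hdisj]
      have h1 : ∑ j ∈ Finset.Icc 1 (i - 1), (if i ≤ j then δ (j - i) else δ (i - j))
          = ∑ r ∈ Finset.Icc 1 (i - 1), δ r := by
        refine Finset.sum_nbij' (fun j => i - j) (fun r => i - r) ?_ ?_ ?_ ?_ ?_
        · intro j hj; simp only [Finset.mem_Icc] at hj ⊢; omega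
        · intro r hr; simp only [Finset.mem_Icc] at hr ⊢; omega
        · intro j hj; simp only [Finset.mem_Icc] at hj; omega
        · intro r hr; simp only [Finset.mem_Icc] at hr; omega
        · intro j hj
          simp only [Finset.mem_Icc] at hj
          rw [if_neg (by omega)]
      have h2 : ∑ j ∈ Finset.Icc (i + 1) k, (if i ≤ j then δ (j - i) else δ (i - j))
          = ∑ r ∈ Finset.Icc 1 (k - i), δ r := by
        refine Finset.sum_nbij' (fun j => j - i) (fun r => r + i) ?_ ?_ ?_ ?_ ?_
        · intro j hj; simp only [Finset.mem_Icc] at hj ⊢; omega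
        · intro r hr; simp only [Finset.mem_Icc] at hr ⊢; omega
        · intro j hj; simp only [Finset.mem_Icc] at hj; omega
        · intro r hr; simp only [Finset.mem_Icc] at hr; omega
        · intro j hj
          simp only [Finset.mem_Icc] at hj
          rw [if_pos (by omega)]
      rw [h1, h2]
      have hle1 : ∑ r ∈ Finset.Icc 1 (i - 1), δ r ≤ Sδ := by
        rw [hSδ_def]
        exact Finset.sum_le_sum_of_subset_of_nonneg
          (Finset.Icc_subset_Icc le_rfl (by omega)) fun r _ _ => hδ_nonneg r
      have hle2 : ∑ r ∈ Finset.Icc 1 (k - i), δ r ≤ Sδ := by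
        rw [hSδ_def]
        exact Finset.sum_le_sum_of_subset_of_nonneg
          (Finset.Icc_subset_Icc le_rfl (by omega)) fun r _ _ => hδ_nonneg r
      linarith
    have : ∑ j ∈ (Finset.Icc 1 k).erase i, ∫ ω, f (X i ω) * f (X j ω) ∂P
        ≤ ∑ j ∈ (Finset.Icc 1 k).erase i, D * (if i ≤ j then δ (j - i) else δ (i - j)) :=
      Finset.sum_le_sum hterm
    rw [← Finset.mul_sum] at this
    have hfin : D * (∑ j ∈ (Finset.Icc 1 k).erase i,
        (if i ≤ j then δ (j - i) else δ (i - j))) ≤ D * (2 * Sδ) :=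
      mul_le_mul_of_nonneg_left hδsum hD_nonneg
    nlinarith [this, hfin]
  have htot : variance S P ≤ (k : ℝ) * (V1 + 2 * D * Sδ) := by
    rw [hVarS, hexp]
    calc ∑ i ∈ Finset.Icc 1 k, ∑ j ∈ Finset.Icc 1 k, ∫ ω, f (X i ω) * f (X j ω) ∂P
        ≤ ∑ _i ∈ Finset.Icc 1 k, (V1 + 2 * D * Sδ) := Finset.sum_le_sum per
      _ = (k : ℝ) * (V1 + 2 * D * Sδ) := by
          rw [Finset.sum_const, Nat.card_Icc, Nat.add_sub_cancel, nsmul_eq_mul]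
  have hk0 : (0 : ℝ) < (k : ℝ) := by exact_mod_cast hk1
  rw [hVar1]
  calc (k : ℝ)⁻¹ * variance S P ≤ (k : ℝ)⁻¹ * ((k : ℝ) * (V1 + 2 * D * Sδ)) :=
        mul_le_mul_of_nonneg_left htot (inv_nonneg.mpr hk0.le)
    _ = V1 + 2 * D * Sδ := by
        rw [inv_mul_cancel_left₀ hk0.ne']
end

section
/- Let Z be a real-valued random variable and let v > 0 and b ≥ 1 be such that ln 𝔼[ exp(t Z) ] ≤ v t² for all 0 ≤ t ≤ 1/b. Then for every x ≥ 0, ℙ( Z ≥ 2 √(v x) + 1.5 b x ) ≤ e^{−x}. -/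
open MeasureTheory ProbabilityTheory Real
open scoped ENNReal

/-- **Chernoff-device step.**
If `log 𝔼 exp(t Z) ≤ v t²` for all `0 ≤ t ≤ 1/b`, with `v > 0` and `b ≥ 1`, then for every
`x ≥ 0`, `ℙ(Z ≥ 2 √(v x) + 1.5 b x) ≤ e^{−x}`. -/
theorem chernoff_subgaussian_on_interval
    {Ω : Type*} [MeasurableSpace Ω] (P : Measure Ω) [IsProbabilityMeasure P]
    (Z : Ω → ℝ) (hZ : Measurable Z)
    (v b : ℝ) (hv : 0 < v) (hb : 1 ≤ b)
    (hint : ∀ t : ℝ, 0 ≤ t → t ≤ 1 / b → Integrable (fun ω => Real.exp (t * Z ω)) P)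
    (hlog : ∀ t : ℝ, 0 ≤ t → t ≤ 1 / b →
      Real.log (∫ ω, Real.exp (t * Z ω) ∂P) ≤ v * t ^ 2)
    (x : ℝ) (hx : 0 ≤ x) :
    P {ω | 2 * Real.sqrt (v * x) + 1.5 * b * x ≤ Z ω}
      ≤ ENNReal.ofReal (Real.exp (-x)) := by
  have hb0 : 0 < b := lt_of_lt_of_le one_pos hb
  set a : ℝ := 2 * Real.sqrt (v * x) + 1.5 * b * x with ha
  set s : ℝ := Real.sqrt (x / v) with hs
  set t : ℝ := min s (1 / b) with htdef
  have hs0 : 0 ≤ s := Real.sqrt_nonneg _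
  have ht0 : 0 ≤ t := le_min hs0 (by positivity)
  have ht1 : t ≤ 1 / b := min_le_right _ _
  have hI := hint t ht0 ht1
  have hmgf_pos : 0 < mgf Z P t := mgf_pos' (IsProbabilityMeasure.ne_zero P) hI
  have hmgf : mgf Z P t ≤ Real.exp (v * t ^ 2) := by
    have hl := hlog t ht0 ht1
    have : Real.log (mgf Z P t) ≤ v * t ^ 2 := hl
    calc mgf Z P t = Real.exp (Real.log (mgf Z P t)) := (Real.exp_log hmgf_pos).symm
      _ ≤ Real.exp (v * t ^ 2) := Real.exp_le_exp.mpr this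
  have hch := measure_ge_le_exp_mul_mgf (X := Z) (μ := P) a ht0 hI
  have hs2 : s ^ 2 = x / v := Real.sq_sqrt (by positivity)
  have hsv : s * Real.sqrt (v * x) = x := by
    rw [hs, ← Real.sqrt_mul (by positivity)]
    have : x / v * (v * x) = x ^ 2 := by field_simp
    rw [this, Real.sqrt_sq hx]
  have hexp : v * t ^ 2 - t * a ≤ -x := by
    rcases min_cases s (1 / b) with ⟨hteq, hle⟩ | ⟨hteq, hle⟩
    · rw [htdef, hteq, ha]
      have h1 : v * s ^ 2 = x := by rw [hs2]; field_simp
      nlinarith [mul_nonneg (mul_nonneg hb0.le hx) hs0]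
    · rw [htdef, hteq, ha]
      have hle' : 1 / b ≤ s := hle.le
      have h1 : (1 / b) ^ 2 ≤ x / v := by
        rw [← hs2]; exact pow_le_pow_left₀ (by positivity) hle' 2
      have h2 : v / b ^ 2 ≤ x := by
        have := mul_le_mul_of_nonneg_left h1 hv.le
        calc v / b ^ 2 = v * (1 / b) ^ 2 := by field_simp
          _ ≤ v * (x / v) := this
          _ = x := by field_simp
      have h3 : v / b ≤ Real.sqrt (v * x) := by
        rw [show v / b = Real.sqrt ((v / b) ^ 2) from (Real.sqrt_sq (by positivity)).symm]
        apply Real.sqrt_le_sqrt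
        have : (v / b) ^ 2 = v * (v / b ^ 2) := by field_simp
        rw [this]
        exact mul_le_mul_of_nonneg_left h2 hv.le
      have h4 : v / b * (1 / b) ≤ Real.sqrt (v * x) * (1 / b) :=
        mul_le_mul_of_nonneg_right h3 (by positivity)
      have h5 : v / b ^ 2 ≤ Real.sqrt (v * x) * (1 / b) := by
        calc v / b ^ 2 = v / b * (1 / b) := by ring
          _ ≤ Real.sqrt (v * x) * (1 / b) := h4
      have h6 : v * (1 / b) ^ 2 - 1 / b * (2 * Real.sqrt (v * x) + 1.5 * b * x)
          = v / b ^ 2 - 2 * (Real.sqrt (v * x) * (1 / b)) - 1.5 * x := by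
        field_simp; ring
      have h7 : (0:ℝ) ≤ v / b ^ 2 := by positivity
      linarith
  have hkey : Real.exp (-t * a) * mgf Z P t ≤ Real.exp (-x) := by
    calc Real.exp (-t * a) * mgf Z P t
        ≤ Real.exp (-t * a) * Real.exp (v * t ^ 2) :=
          mul_le_mul_of_nonneg_left hmgf (Real.exp_nonneg _)
      _ = Real.exp (v * t ^ 2 - t * a) := by rw [← Real.exp_add]; ring_nf
      _ ≤ Real.exp (-x) := Real.exp_le_exp.mpr hexp
  have hfin : P {ω | a ≤ Z ω} ≠ ⊤ := measure_ne_top _ _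
  rw [← ENNReal.ofReal_toReal hfin]
  exact ENNReal.ofReal_le_ofReal (hch.trans hkey)
end

section
/- Let (ξ_t)_{t∈ℤ} be an i.i.d. sequence in a metric space (𝒴, ρ), suppose there exist y₀ ∈ 𝒴 and B > 0 with ρ(ξ_1, y₀) ≤ B/2 almost surely, and let H : 𝒴^{ℕ∖{0}} → 𝒳 satisfy d( H((x_i)_{i≥1}), H((y_i)_{i≥1}) ) ≤ Σ_{i≥1} a_i ρ(x_i, y_i) with a_i ≥ 0 and Σ_{i≥1} a_i < ∞. Define X_t = H( (ξ_{t−i+1})_{i≥1} ). Then (X_t) is strictly stationary and for every n ≥ 1 the sample (X_1,…,X_n) satisfies condition (cl) with δ'_r = B Σ_{i≥r} a_i: namely, for all r ≥ 1 and all 1 ≤ j ≤ n − 2r + 1, the vector (X*_i)_{r+j ≤ i ≤ 2r+j−1} defined by X*_i = H( (η_{i−ℓ+1})_{ℓ≥1} ), where η_s = ξ_s for s > j and η_s = ξ'_s for s ≤ j for an independent copy (ξ'_t) of (ξ_t), has the same joint law as (X_i)_{r+j ≤ i ≤ 2r+j−1}, is independent of 𝓜_j = σ(X_t : 1 ≤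 t ≤ j), and satisfies Σ_{i=r+j}^{2r+j−1} d(X_i, X*_i) ≤ r B Σ_{i≥r} a_i almost surely. -/
open MeasureTheory ProbabilityTheory Real
open scoped ENNReal

private lemma bsc_prod_option {M : Type*} [CommMonoid M] (u : Finset (Option ℤ))
    (hu : none ∉ u) (g : Option ℤ → M) :
    ∏ i ∈ u, g i = ∏ t ∈ u.eraseNone, g (some t) := by
  refine (Finset.prod_bij (fun t _ => (some t : Option ℤ)) ?_ ?_ ?_ ?_).symm
  · intro t ht; exact Finset.mem_eraseNone.1 ht
  · intro a₁ _ a₂ _ h; exact Option.some_injective _ h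
  · rintro (_ | t) hb
    · exact absurd hb hu
    · exact ⟨t, Finset.mem_eraseNone.2 hb, rfl⟩
  · intro t _; rfl

private lemma bsc_biInter_option {Ω : Type*} (u : Finset (Option ℤ)) (hu : none ∉ u)
    (f : Option ℤ → Set Ω) :
    (⋂ i ∈ u, f i) = ⋂ t ∈ u.eraseNone, f (some t) := by
  ext x
  simp only [Set.mem_iInter, Finset.mem_eraseNone]
  constructor
  · intro h t ht; exact h _ ht
  · rintro h (_ | t) hi
    · exact absurd hi hu
    · exact h t hi

private lemma bsc_law_eq_of_cylinders {Ω : Type*} [MeasurableSpace Ω] (P : Measure Ω)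
    [IsProbabilityMeasure P] {𝒴 : Type*} [MeasurableSpace 𝒴] (Y Z : ℤ → Ω → 𝒴)
    (hY : ∀ t, Measurable (Y t)) (hZ : ∀ t, Measurable (Z t))
    (h : ∀ (s : Finset ℤ) (A : ℤ → Set 𝒴), (∀ t, MeasurableSet (A t)) →
      P (⋂ t ∈ s, Y t ⁻¹' A t) = P (⋂ t ∈ s, Z t ⁻¹' A t)) :
    Measure.map (fun ω => fun t => Y t ω) P = Measure.map (fun ω => fun t => Z t ω) P := by
  classical
  have hYm : Measurable (fun ω => fun t => Y t ω) := measurable_pi_lambda _ hY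
  have hZm : Measurable (fun ω => fun t => Z t ω) := measurable_pi_lambda _ hZ
  haveI : IsProbabilityMeasure (Measure.map (fun ω => fun t => Y t ω) P) :=
    Measure.isProbabilityMeasure_map hYm.aemeasurable
  haveI : IsProbabilityMeasure (Measure.map (fun ω => fun t => Z t ω) P) :=
    Measure.isProbabilityMeasure_map hZm.aemeasurable
  refine ext_of_generate_finite _ generateFrom_squareCylinders.symm
    (isPiSystem_squareCylinders (fun _ => MeasurableSpace.isPiSystem_measurableSet)
      (fun _ => MeasurableSet.univ)) ?_ (by simp)
  rintro S ⟨s, A, hA, rfl⟩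
  have hA' : ∀ t, MeasurableSet (A t) := fun t => hA t trivial
  have hSm : MeasurableSet ((s : Set ℤ).pi A) :=
    MeasurableSet.pi s.countable_toSet (fun t _ => hA' t)
  rw [Measure.map_apply hYm hSm, Measure.map_apply hZm hSm]
  have hpre : ∀ (W : ℤ → Ω → 𝒴),
      (fun ω => fun t => W t ω) ⁻¹' ((s : Set ℤ).pi A) = ⋂ t ∈ s, W t ⁻¹' A t := by
    intro W; ext x; simp [Set.mem_pi]
  rw [hpre Y, hpre Z]
  exact h s A hA'

/-- **Section 5.4 (Bernoulli shifts).**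
For an i.i.d. sequence `ξ` in a metric space `𝒴` with `ρ(ξ_1, y₀) ≤ B/2` a.s., and
`X_t = H((ξ_{t−ℓ})_{ℓ≥0})` with `H` Lipschitz with summable nonnegative coefficients
(`a (ℓ+1)` is the coefficient of the coordinate of lag `ℓ`), the process `X` is strictly
stationary and the explicit coupling `X*` (replace `ξ_s` by an independent copy `ξ'_s`
for `s ≤ j`) witnesses condition (cl) with `δ'_r = B Σ_{i≥r} a_i`. -/
theorem bernoulli_shift_coupling
    {Ω : Type*} [MeasurableSpace Ω] (P : Measure Ω) [IsProbabilityMeasure P]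
    {𝒳 : Type*} [MetricSpace 𝒳] [MeasurableSpace 𝒳] [BorelSpace 𝒳]
    {𝒴 : Type*} [MetricSpace 𝒴] [MeasurableSpace 𝒴] [BorelSpace 𝒴]
    -- (ξ_t) i.i.d., (ξ'_t) an independent copy of the process (ξ_t)
    (ξ ξ' : ℤ → Ω → 𝒴)
    (hξmeas : ∀ t, Measurable (ξ t)) (hξ'meas : ∀ t, Measurable (ξ' t))
    (hξindep : iIndepFun ξ P)
    (hξident : ∀ t : ℤ, Measure.map (ξ t) P = Measure.map (ξ 0) P)
    (hcopy : Measure.map (fun ω => fun t : ℤ => ξ' t ω) P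
        = Measure.map (fun ω => fun t : ℤ => ξ t ω) P)
    (hindcopy : IndepFun (fun ω => fun t : ℤ => ξ t ω) (fun ω => fun t : ℤ => ξ' t ω) P)
    -- boundedness: ρ(ξ_1, y₀) ≤ B/2 a.s.
    (y₀ : 𝒴) (B : ℝ) (hB : 0 < B) (hbdd : ∀ᵐ ω ∂P, dist (ξ 1 ω) y₀ ≤ B / 2)
    -- H Lipschitz with coefficients a_i ≥ 0, Σ_{i≥1} a_i < ∞
    (H : (ℕ → 𝒴) → 𝒳) (hH : Measurable H)
    (a : ℕ → ℝ) (ha_nonneg : ∀ i, 0 ≤ a i) (ha_summable : Summable fun l => a (l + 1))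
    (hHlip : ∀ x y : ℕ → 𝒴, dist (H x) (H y) ≤ ∑' l, a (l + 1) * dist (x l) (y l))
    -- X_t = H((ξ_{t−ℓ})_{ℓ≥0}) and the coupled version
    (X : ℤ → Ω → 𝒳) (hX : ∀ (t : ℤ) (ω : Ω), X t ω = H (fun l => ξ (t - l) ω))
    (Xstar : ℕ → ℕ → Ω → 𝒳)
    (hXstar : ∀ (j i : ℕ) (ω : Ω), Xstar j i ω
      = H (fun l => if (j : ℤ) < (i : ℤ) - l then ξ ((i : ℤ) - l) ω else ξ' ((i : ℤ) - l) ω)) :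
    -- X is strictly stationary
    (∀ (m : ℕ) (k : ℤ),
      Measure.map (fun ω => fun i : Fin m => X ((i : ℤ) + k) ω) P
        = Measure.map (fun ω => fun i : Fin m => X (i : ℤ) ω) P) ∧
    -- for every n ≥ 1, (X_1,…,X_n) satisfies condition (cl) with δ'_r = B Σ_{i≥r} a_i,
    -- witnessed by the explicit coupling X*
    (∀ n r j : ℕ, 1 ≤ n → 1 ≤ r → 1 ≤ j → 2 * r + j ≤ n + 1 →
      Measure.map (fun ω => fun i : Fin r => Xstar j (r + j + i) ω) P
        = Measure.map (fun ω => fun i : Fin r => X ((r : ℤ) + (j : ℤ) + (i : ℤ)) ω) P ∧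
      Indep
        (MeasurableSpace.comap (fun ω => fun i : Fin r => Xstar j (r + j + i) ω) inferInstance)
        (⨆ t ∈ Set.Icc 1 j, MeasurableSpace.comap (X (t : ℤ)) inferInstance) P ∧
      (∀ᵐ ω ∂P,
        ∑ i : Fin r, dist (X ((r : ℤ) + (j : ℤ) + (i : ℤ)) ω) (Xstar j (r + j + i) ω)
          ≤ (r : ℝ) * (B * ∑' l : ℕ, a (r + l)))) := by
  classical
  set Ξ : Ω → ℤ → 𝒴 := fun ω t => ξ t ω with hΞdef
  set Ξ' : Ω → ℤ → 𝒴 := fun ω t => ξ' t ω with hΞ'def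
  have hΞm : Measurable Ξ := measurable_pi_lambda _ hξmeas
  have hΞ'm : Measurable Ξ' := measurable_pi_lambda _ hξ'meas
  set ν : Measure 𝒴 := Measure.map (ξ 0) P with hνdef
  -- cylinder formula for ξ
  have hcylξ : ∀ (s : Finset ℤ) (A : ℤ → Set 𝒴), (∀ t, MeasurableSet (A t)) →
      P (⋂ t ∈ s, ξ t ⁻¹' A t) = ∏ t ∈ s, ν (A t) := by
    intro s A hA
    rw [hξindep.meas_biInter (fun t _ => ⟨A t, hA t, rfl⟩)]
    refine Finset.prod_congr rfl fun t _ => ?_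
    rw [← hξident t, Measure.map_apply (hξmeas t) (hA t)]
  constructor
  · -- stationarity
    intro m k
    have hstat : Measure.map (fun ω => fun t : ℤ => ξ (t + k) ω) P = Measure.map Ξ P := by
      refine bsc_law_eq_of_cylinders P _ _ (fun t => hξmeas (t + k)) hξmeas ?_
      intro s A hA
      have h1 : (⋂ t ∈ s, (fun ω => ξ (t + k) ω) ⁻¹' A t)
          = ⋂ u ∈ s.image (· + k), ξ u ⁻¹' A (u - k) := by
        ext x
        simp only [Set.mem_iInter, Finset.mem_image, Set.mem_preimage]
        constructor
        · rintro h u ⟨t, ht, rfl⟩; simpa using h t ht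
        · intro h t ht; simpa using h (t + k) ⟨t, ht, rfl⟩
      rw [h1, hcylξ _ _ (fun u => hA (u - k)), hcylξ s A hA]
      rw [Finset.prod_image (by intro t _ t' _ h; exact add_right_cancel h)]
      refine Finset.prod_congr rfl fun t _ => ?_
      simp
    set G : (ℤ → 𝒴) → Fin m → 𝒳 := fun u i => H (fun l => u ((i : ℤ) - l)) with hGdef
    have hGm : Measurable G :=
      measurable_pi_lambda _ fun i =>
        hH.comp (measurable_pi_lambda _ fun l => measurable_pi_apply _)
    have e1 : (fun ω => fun i : Fin m => X ((i : ℤ) + k) ω)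
        = G ∘ (fun ω => fun t : ℤ => ξ (t + k) ω) := by
      funext ω i
      rw [hX]
      exact congrArg H (funext fun l => congrArg (fun t => ξ t ω) (by ring))
    have e0 : (fun ω => fun i : Fin m => X ((i : ℤ)) ω) = G ∘ Ξ := by
      funext ω i
      rw [hX]
      rfl
    rw [e1, e0, ← Measure.map_map hGm (measurable_pi_lambda _ fun t => hξmeas (t + k)),
      ← Measure.map_map hGm hΞm, hstat]
  · -- the coupling
    intro n r j hn hr hj hn2
    set η : ℤ → Ω → 𝒴 := fun t ω => if (j : ℤ) < t then ξ t ω else ξ' t ω with hηdef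
    have hηmeas : ∀ t, Measurable (η t) := by
      intro t
      by_cases h : (j : ℤ) < t
      · simpa [hηdef, h] using hξmeas t
      · simpa [hηdef, h] using hξ'meas t
    have hηm : Measurable (fun ω => fun t : ℤ => η t ω) := measurable_pi_lambda _ hηmeas
    -- cylinder formula for η
    have hcylη : ∀ (s : Finset ℤ) (A : ℤ → Set 𝒴), (∀ t, MeasurableSet (A t)) →
        P (⋂ t ∈ s, η t ⁻¹' A t) = ∏ t ∈ s, ν (A t) := by
      intro s A hA
      set s₁ := s.filter (fun t => (j : ℤ) < t) with hs₁
      set s₂ := s.filter (fun t => ¬ (j : ℤ) < t) with hs₂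
      have hsplit : (⋂ t ∈ s, η t ⁻¹' A t)
          = (⋂ t ∈ s₁, ξ t ⁻¹' A t) ∩ (⋂ t ∈ s₂, ξ' t ⁻¹' A t) := by
        ext x
        simp only [Set.mem_inter_iff, Set.mem_iInter, Set.mem_preimage, hs₁, hs₂,
          Finset.mem_filter]
        constructor
        · intro h
          refine ⟨fun t ht => ?_, fun t ht => ?_⟩
          · simpa [hηdef, ht.2] using h t ht.1
          · simpa [hηdef, ht.2] using h t ht.1
        · rintro ⟨h1, h2⟩ t ht
          by_cases hc : (j : ℤ) < t
          · simpa [hηdef, hc] using h1 t ⟨ht, hc⟩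
          · simpa [hηdef, hc] using h2 t ⟨ht, hc⟩
      set C₁ : Set (ℤ → 𝒴) := ⋂ t ∈ s₁, (fun u : ℤ → 𝒴 => u t) ⁻¹' A t with hC₁def
      set C₂ : Set (ℤ → 𝒴) := ⋂ t ∈ s₂, (fun u : ℤ → 𝒴 => u t) ⁻¹' A t with hC₂def
      have hC₁ : MeasurableSet C₁ :=
        MeasurableSet.biInter s₁.countable_toSet fun t _ => measurable_pi_apply t (hA t)
      have hC₂ : MeasurableSet C₂ :=
        MeasurableSet.biInter s₂.countable_toSet fun t _ => measurable_pi_apply t (hA t)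
      have hpre1 : Ξ ⁻¹' C₁ = ⋂ t ∈ s₁, ξ t ⁻¹' A t := by
        ext x; simp [hC₁def, hΞdef]
      have hpre2 : Ξ' ⁻¹' C₂ = ⋂ t ∈ s₂, ξ' t ⁻¹' A t := by
        ext x; simp [hC₂def, hΞ'def]
      have hpre2' : Ξ ⁻¹' C₂ = ⋂ t ∈ s₂, ξ t ⁻¹' A t := by
        ext x; simp [hC₂def, hΞdef]
      rw [hsplit, ← hpre1, ← hpre2]
      rw [hindcopy.meas_inter ⟨C₁, hC₁, rfl⟩ ⟨C₂, hC₂, rfl⟩]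
      have h2 : P (Ξ' ⁻¹' C₂) = P (Ξ ⁻¹' C₂) := by
        rw [← Measure.map_apply hΞ'm hC₂, ← Measure.map_apply hΞm hC₂, hcopy]
      rw [h2, hpre1, hpre2', hcylξ _ _ hA, hcylξ _ _ hA]
      exact Finset.prod_filter_mul_prod_filter_not s _ _
    refine ⟨?_, ?_, ?_⟩
    · -- equality in law
      set G : (ℤ → 𝒴) → Fin r → 𝒳 :=
        fun u i => H (fun l => u ((r : ℤ) + (j : ℤ) + (i : ℤ) - l)) with hGdef
      have hGm : Measurable G :=
        measurable_pi_lambda _ fun i =>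
          hH.comp (measurable_pi_lambda _ fun l => measurable_pi_apply _)
      have hcast : ∀ i : Fin r, ((r + j + (i : ℕ) : ℕ) : ℤ) = (r : ℤ) + (j : ℤ) + (i : ℤ) := by
        intro i; push_cast; ring
      have eXstar : (fun ω => fun i : Fin r => Xstar j (r + j + i) ω)
          = G ∘ (fun ω => fun t : ℤ => η t ω) := by
        funext ω i
        rw [hXstar]
        refine congrArg H (funext fun l => ?_)
        rw [hcast i]
      have eX : (fun ω => fun i : Fin r => X ((r : ℤ) + (j : ℤ) + (i : ℤ)) ω) = G ∘ Ξ := by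
        funext ω i
        rw [hX]
        rfl
      have hlaw : Measure.map (fun ω => fun t : ℤ => η t ω) P = Measure.map Ξ P := by
        refine bsc_law_eq_of_cylinders P _ _ hηmeas hξmeas ?_
        intro s A hA
        rw [hcylη s A hA, hcylξ s A hA]
      rw [eXstar, eX, ← Measure.map_map hGm hηm, ← Measure.map_map hGm hΞm, hlaw]
    · -- independence
      set m : Option ℤ → MeasurableSpace Ω := fun o =>
        Option.elim o (MeasurableSpace.comap Ξ' inferInstance)
          (fun t => MeasurableSpace.comap (ξ t) inferInstance) with hmdef
      have h_le : ∀ o, m o ≤ ‹MeasurableSpace Ω› := by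
        rintro (_ | t)
        · exact hΞ'm.comap_le
        · exact (hξmeas t).comap_le
      have hii : iIndep m P := by
        rw [iIndep_iff]
        intro s f hf
        have hAex : ∀ t : ℤ, ∃ A : Set 𝒴,
            MeasurableSet A ∧ (some t ∈ s → ξ t ⁻¹' A = f (some t)) := by
          intro t
          by_cases ht : some t ∈ s
          · obtain ⟨A, hA, hA2⟩ := hf (some t) ht
            exact ⟨A, hA, fun _ => hA2⟩
          · exact ⟨Set.univ, MeasurableSet.univ, fun h => absurd h ht⟩
        choose A hAmeas hApre using hAex
        set C₁ : Set (ℤ → 𝒴) := ⋂ t ∈ s.eraseNone, (fun u : ℤ → 𝒴 => u t) ⁻¹' A t with hC₁def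
        have hC₁ : MeasurableSet C₁ :=
          MeasurableSet.biInter (s.eraseNone).countable_toSet fun t _ =>
            measurable_pi_apply t (hAmeas t)
        have hpre1 : Ξ ⁻¹' C₁ = ⋂ t ∈ s.eraseNone, ξ t ⁻¹' A t := by
          ext x; simp [hC₁def, hΞdef]
        have hprod : ∏ t ∈ s.eraseNone, P (ξ t ⁻¹' A t)
            = ∏ t ∈ s.eraseNone, P (f (some t)) := by
          refine Finset.prod_congr rfl fun t ht => ?_
          rw [hApre t (Finset.mem_eraseNone.1 ht)]
        have hmain : P (⋂ t ∈ s.eraseNone, ξ t ⁻¹' A t)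
            = ∏ t ∈ s.eraseNone, P (ξ t ⁻¹' A t) :=
          hξindep.meas_biInter (fun t _ => ⟨A t, hAmeas t, rfl⟩)
        by_cases hnone : none ∈ s
        · obtain ⟨S, hS, hSpre⟩ := hf none hnone
          have h1 : (⋂ i ∈ s, f i) = (⋂ t ∈ s.eraseNone, ξ t ⁻¹' A t) ∩ f none := by
            ext x
            simp only [Set.mem_iInter, Set.mem_inter_iff, Finset.mem_eraseNone]
            constructor
            · intro h
              exact ⟨fun t ht => (hApre t ht).symm ▸ h _ ht, h none hnone⟩
            · rintro ⟨h1, h2⟩ i hi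
              match i with
              | none => exact h2
              | some t => exact (hApre t hi) ▸ h1 t hi
          rw [h1, ← hSpre, ← hpre1,
            hindcopy.meas_inter ⟨C₁, hC₁, rfl⟩ ⟨S, hS, rfl⟩, hpre1, hmain, hprod]
          have h2 : ∏ i ∈ s, P (f i) = P (f none) * ∏ i ∈ s.erase none, P (f i) :=
            (Finset.mul_prod_erase s _ hnone).symm
          have h3 : ∏ i ∈ s.erase none, P (f i)
              = ∏ t ∈ (s.erase none).eraseNone, P (f (some t)) :=
            bsc_prod_option _ (Finset.notMem_erase _ _) _
          have h4 : (s.erase none).eraseNone = s.eraseNone := by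
            ext t
            simp [Finset.mem_eraseNone, Finset.mem_erase]
          rw [h2, h3, h4, hSpre, mul_comm]
        · have h1 : (⋂ i ∈ s, f i) = ⋂ t ∈ s.eraseNone, ξ t ⁻¹' A t := by
            rw [bsc_biInter_option s hnone]
            exact Set.iInter₂_congr fun t ht => (hApre t (Finset.mem_eraseNone.1 ht)).symm
          rw [h1, hmain, hprod, bsc_prod_option s hnone]
      set Sset : Set (Option ℤ) :=
        {o | o = none ∨ ∃ t : ℤ, o = some t ∧ (j : ℤ) < t} with hSsetdef
      have hbig := indep_biSup_compl h_le hii Sset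
      refine indep_of_indep_of_le_left (indep_of_indep_of_le_right hbig ?_) ?_
      · -- right: σ(X_1,…,X_j) ≤ ⨆ o ∈ Ssetᶜ
        refine iSup₂_le fun t ht => ?_
        have hXm : Measurable[⨆ o ∈ Ssetᶜ, m o] (X (t : ℤ)) := by
          have e : X (t : ℤ) = fun ω => H (fun l => ξ ((t : ℤ) - l) ω) := funext (hX _)
          rw [e]
          have hf : Measurable[⨆ o ∈ Ssetᶜ, m o] (fun ω => fun l : ℕ => ξ ((t : ℤ) - l) ω) := by
            refine @measurable_pi_lambda Ω ℕ (fun _ => 𝒴) (⨆ o ∈ Ssetᶜ, m o) _ _ (fun l => ?_)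
            have hmem : some ((t : ℤ) - l) ∈ Ssetᶜ := by
              simp only [hSsetdef, Set.mem_compl_iff, Set.mem_setOf_eq]
              push_neg
              refine ⟨Option.some_ne_none _, fun u hu => ?_⟩
              have hu' : ((t : ℤ) - l) = u := Option.some_injective _ hu
              subst hu'
              have ht2 : (t : ℤ) ≤ (j : ℤ) := by exact_mod_cast ht.2
              omega
            exact measurable_iff_comap_le.2 (le_biSup m hmem)
          exact hH.comp hf
        exact hXm.comap_le
      · -- left: σ(Xstar window) ≤ ⨆ o ∈ Sset
        have hWm : Measurable[⨆ o ∈ Sset, m o]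
            (fun ω => fun i : Fin r => Xstar j (r + j + i) ω) := by
          refine @measurable_pi_lambda Ω (Fin r) (fun _ => 𝒳) (⨆ o ∈ Sset, m o) _ _ (fun i => ?_)
          have e : Xstar j (r + j + (i : ℕ))
              = fun ω => H (fun l => if (j : ℤ) < ((r + j + (i : ℕ) : ℕ) : ℤ) - l
                  then ξ (((r + j + (i : ℕ) : ℕ) : ℤ) - l) ω
                  else ξ' (((r + j + (i : ℕ) : ℕ) : ℤ) - l) ω) :=
            funext (hXstar _ _)
          rw [e]
          have hf : Measurable[⨆ o ∈ Sset, m o]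
              (fun ω => fun l : ℕ => if (j : ℤ) < ((r + j + (i : ℕ) : ℕ) : ℤ) - l
                  then ξ (((r + j + (i : ℕ) : ℕ) : ℤ) - l) ω
                  else ξ' (((r + j + (i : ℕ) : ℕ) : ℤ) - l) ω) := by
            refine @measurable_pi_lambda Ω ℕ (fun _ => 𝒴) (⨆ o ∈ Sset, m o) _ _ (fun l => ?_)
            by_cases hc : (j : ℤ) < ((r + j + (i : ℕ) : ℕ) : ℤ) - l
            · simp only [if_pos hc]
              have hmem : some (((r + j + (i : ℕ) : ℕ) : ℤ) - l) ∈ Sset :=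
                Or.inr ⟨_, rfl, hc⟩
              exact measurable_iff_comap_le.2 (le_biSup m hmem)
            · simp only [if_neg hc]
              have hmem : (none : Option ℤ) ∈ Sset := Or.inl rfl
              have hΞ'meas : Measurable[⨆ o ∈ Sset, m o] Ξ' :=
                measurable_iff_comap_le.2 (le_biSup m hmem)
              exact (measurable_pi_apply _).comp hΞ'meas
          exact hH.comp hf
        exact hWm.comap_le
    · -- almost-sure bound
      have hK : MeasurableSet {y : 𝒴 | dist y y₀ ≤ B / 2} := by
        have hc : Continuous fun y : 𝒴 => dist y y₀ := continuous_id.dist continuous_const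
        exact (isClosed_le hc continuous_const).measurableSet
      have hae : ∀ f : Ω → 𝒴, Measurable f → Measure.map f P = Measure.map (ξ 1) P →
          ∀ᵐ ω ∂P, dist (f ω) y₀ ≤ B / 2 := by
        intro f hf hlaw
        have h0 : P {ω | ¬ dist (f ω) y₀ ≤ B / 2} = 0 := by
          have e : {ω | ¬ dist (f ω) y₀ ≤ B / 2} = f ⁻¹' {y : 𝒴 | dist y y₀ ≤ B / 2}ᶜ := rfl
          rw [e, ← Measure.map_apply hf hK.compl, hlaw,
            Measure.map_apply (hξmeas 1) hK.compl]
          exact ae_iff.1 hbdd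
        exact ae_iff.2 h0
      have hlawt : ∀ t : ℤ, Measure.map (ξ t) P = Measure.map (ξ 1) P := fun t =>
        (hξident t).trans (hξident 1).symm
      have hlawt' : ∀ t : ℤ, Measure.map (ξ' t) P = Measure.map (ξ 1) P := by
        intro t
        have e : ξ' t = (fun u : ℤ → 𝒴 => u t) ∘ Ξ' := rfl
        have e2 : ξ t = (fun u : ℤ → 𝒴 => u t) ∘ Ξ := rfl
        rw [e, ← Measure.map_map (measurable_pi_apply t) hΞ'm, hcopy,
          Measure.map_map (measurable_pi_apply t) hΞm, ← e2]
        exact hlawt t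
      have hball : ∀ᵐ ω ∂P, ∀ t : ℤ, dist (ξ t ω) y₀ ≤ B / 2 ∧ dist (ξ' t ω) y₀ ≤ B / 2 := by
        rw [ae_all_iff]
        intro t
        exact (hae (ξ t) (hξmeas t) (hlawt t)).and (hae (ξ' t) (hξ'meas t) (hlawt' t))
      -- summability facts
      have hTsummable : Summable fun l : ℕ => a (r + l) := by
        refine ((summable_nat_add_iff (f := fun l => a (l + 1)) (r - 1)).2 ha_summable).congr ?_
        intro l
        congr 1
        omega
      have hTail : Summable fun l : ℕ => a (r + (l + 1)) :=
        (summable_nat_add_iff (f := fun l => a (r + l)) 1).2 hTsummable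
      have htsum_le : ∑' l : ℕ, a (r + (l + 1)) ≤ ∑' l : ℕ, a (r + l) := by
        rw [Summable.tsum_eq_zero_add hTsummable]
        exact le_add_of_nonneg_left (ha_nonneg _)
      refine Filter.Eventually.mono hball ?_
      intro ω hω
      have key : ∀ i : Fin r,
          dist (X ((r : ℤ) + (j : ℤ) + (i : ℤ)) ω) (Xstar j (r + j + i) ω)
            ≤ B * ∑' l : ℕ, a (r + l) := by
        intro i
        have hcast : ((r + j + (i : ℕ) : ℕ) : ℤ) = (r : ℤ) + (j : ℤ) + (i : ℤ) := by
          push_cast; ring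
        rw [hX, hXstar, hcast]
        refine le_trans (hHlip _ _) ?_
        set c : ℤ := (r : ℤ) + (j : ℤ) + (i : ℤ) with hcdef
        set D : ℕ → ℝ := fun l =>
          dist (ξ (c - l) ω) (if (j : ℤ) < c - l then ξ (c - l) ω else ξ' (c - l) ω) with hDdef
        have hD0 : ∀ l, l < r → D l = 0 := by
          intro l hl
          have hc : (j : ℤ) < c - l := by
            simp only [hcdef]
            have h1 : (l : ℤ) < (r : ℤ) := by exact_mod_cast hl
            have h2 : (0 : ℤ) ≤ ((i : ℕ) : ℤ) := Int.ofNat_nonneg _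
            omega
          simp [hDdef, hc]
        have hDB : ∀ l, D l ≤ B := by
          intro l
          by_cases hc : (j : ℤ) < c - l
          · simp [hDdef, hc, hB.le]
          · simp only [hDdef, if_neg hc]
            have h1 := (hω (c - l)).1
            have h2 := (hω (c - l)).2
            calc dist (ξ (c - l) ω) (ξ' (c - l) ω)
                ≤ dist (ξ (c - l) ω) y₀ + dist y₀ (ξ' (c - l) ω) := dist_triangle _ _ _
              _ ≤ B / 2 + B / 2 := by
                  refine add_le_add h1 ?_
                  rw [dist_comm]
                  exact h2
              _ = B := by ring
        have hfsum : Summable fun l => a (l + 1) * D l :=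
          Summable.of_nonneg_of_le (fun l => mul_nonneg (ha_nonneg _) dist_nonneg)
            (fun l => mul_le_mul_of_nonneg_left (hDB l) (ha_nonneg _))
            (ha_summable.mul_right B)
        have hshift : Summable fun l => a (l + r + 1) * D (l + r) :=
          (summable_nat_add_iff (f := fun l => a (l + 1) * D l) r).2 hfsum
        calc ∑' l, a (l + 1) * D l
            = ∑ l ∈ Finset.range r, (a (l + 1) * D l) + ∑' l, a (l + r + 1) * D (l + r) :=
              (hfsum.sum_add_tsum_nat_add r).symm
          _ = ∑' l, a (l + r + 1) * D (l + r) := by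
              rw [Finset.sum_eq_zero, zero_add]
              intro l hl
              rw [hD0 l (Finset.mem_range.1 hl), mul_zero]
          _ ≤ ∑' l, B * a (r + (l + 1)) := by
              refine Summable.tsum_le_tsum (fun l => ?_) hshift (hTail.mul_left B)
              calc a (l + r + 1) * D (l + r)
                  ≤ a (l + r + 1) * B := mul_le_mul_of_nonneg_left (hDB _) (ha_nonneg _)
                _ = B * a (r + (l + 1)) := by rw [mul_comm, show l + r + 1 = r + (l + 1) from by omega]
          _ = B * ∑' l, a (r + (l + 1)) := tsum_mul_left
          _ ≤ B * ∑' l, a (r + l) := mul_le_mul_of_nonneg_left htsum_le hB.le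
      calc ∑ i : Fin r, dist (X ((r : ℤ) + (j : ℤ) + (i : ℤ)) ω) (Xstar j (r + j + i) ω)
          ≤ ∑ _i : Fin r, B * ∑' l : ℕ, a (r + l) :=
            Finset.sum_le_sum fun i _ => key i
        _ = (r : ℝ) * (B * ∑' l : ℕ, a (r + l)) := by
            simp [Finset.sum_const, Finset.card_univ, nsmul_eq_mul]
end
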